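/- For every real number x, ∏_{γ∈Φ⁺} ⟨xω₂+(6−2x)(ω₀+ω₁), γ⟩ = 2³·3⁴ · x(x−3)²(x−6)(x+6)(x−12). -/

import Mathlib

open scoped InnerProductSpace

noncomputable section

namespace PasquierA1G2

abbrev W : Type := EuclideanSpace ℝ (Fin 5)

def α₀ : W := (WithLp.equiv 2 (Fin 5 → ℝ)).symm ![1, -1, 0, 0, 0]
def α₁ : W := (WithLp.equiv 2 (Fin 5 → ℝ)).symm ![0, 0, 1, -1, 0]
def α₂ : W := (WithLp.equiv 2 (Fin 5 → ℝ)).symm ![0, 0, -2, 1, 1]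

def ω₀ : W := (1 / 2 : ℝ) • α₀
def ω₁ : W := (2 : ℝ) • α₁ + α₂
def ω₂ : W := (3 : ℝ) • α₁ + (2 : ℝ) • α₂

def PhiPlus : List W :=
  [α₀, α₁, α₂, α₁ + α₂, (2 : ℝ) • α₁ + α₂, (3 : ℝ) • α₁ + α₂,
   (3 : ℝ) • α₁ + (2 : ℝ) • α₂]

def ρ : W := (1 / 2 : ℝ) • α₀ + (5 : ℝ) • α₁ + (3 : ℝ) • α₂

/-- ∏_{γ∈Φ⁺} ⟨xω₂+(6−2x)(ω₀+ω₁), γ⟩ = 2³·3⁴ · x(x−3)²(x−6)(x+6)(x−12). -/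
theorem prod_numerators (x : ℝ) :
    (PhiPlus.map fun γ => ⟪x • ω₂ + (6 - 2 * x) • (ω₀ + ω₁), γ⟫_ℝ).prod
      = 2 ^ 3 * 3 ^ 4 * (x * (x - 3) ^ 2 * (x - 6) * (x + 6) * (x - 12)) := by
  simp [PhiPlus, ω₀, ω₁, ω₂, α₀, α₁, α₂, PiLp.inner_apply, Fin.sum_univ_five,
    WithLp.equiv_symm_apply, PiLp.toLp_apply]
  ring

end PasquierA1G2
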